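/- Let G be a finite group and p a prime such that |G : Z(G)| = p^2. Then the Chermak-Delgado lattice CD(G) is exactly the set of subgroups H of G with Z(G) ≤ H; moreover every subgroup H with Z(G) < H < G is abelian, and there are exactly p+1 such subgroups (so CD(G) is a quasi-antichain of width p+1). -/

import Mathlib

/-- The Chermak-Delgado measure of a subgroup `H` of `G`: `|H| · |C_G(H)|`. -/
noncomputable def cdMeasure (G : Type*) [Group G] (H : Subgroup G) : ℕ :=
  Nat.card H * Nat.card (Subgroup.centralizer (H : Set G))

/-- The Chermak-Delgado lattice of `G`: the set of subgroups whose
Chermak-Delgado measure is maximal. -/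
def CD (G : Type*) [Group G] : Set (Subgroup G) :=
  {H : Subgroup G | ∀ K : Subgroup G, cdMeasure G K ≤ cdMeasure G H}

section Helpers

open Subgroup

variable {G : Type*} [Group G] [Finite G] {p : ℕ}

/-- A middle subgroup has index `p`. -/
lemma middle_index (hp : p.Prime) (hZ : (center G).index = p ^ 2)
    {H : Subgroup G} (h1 : center G < H) (h2 : H < ⊤) : H.index = p := by
  have hrel := Subgroup.relIndex_mul_index h1.le
  rw [hZ] at hrel
  have hne1 : H.index ≠ 1 := by
    simp only [ne_eq, Subgroup.index_eq_one]
    exact h2.ne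
  have hdvd : H.index ∣ p ^ 2 := ⟨_, by rw [← hrel, mul_comm]⟩
  obtain ⟨k, hk2, hkeq⟩ := (Nat.dvd_prime_pow hp).mp hdvd
  interval_cases k
  · rw [pow_zero] at hkeq; exact absurd hkeq hne1
  · simpa using hkeq
  · exfalso
    rw [hkeq] at hrel
    have hr : (center G).relIndex H = 1 :=
      Nat.eq_of_mul_eq_mul_right (pow_pos hp.pos 2) (by rw [hrel, one_mul])
    rw [Subgroup.relIndex_eq_one] at hr
    exact absurd hr (not_le_of_gt h1)

lemma middle_card (hp : p.Prime) (hZ : (center G).index = p ^ 2)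
    {H : Subgroup G} (h1 : center G < H) (h2 : H < ⊤) :
    Nat.card H = p * Nat.card (center G) := by
  have hi := middle_index hp hZ h1 h2
  have e1 : H.index * Nat.card H = Nat.card G := Subgroup.index_mul_card H
  have e2 : (center G).index * Nat.card (center G) = Nat.card G :=
    Subgroup.index_mul_card (center G)
  rw [hi] at e1
  rw [hZ] at e2
  have : p * Nat.card H = p * (p * Nat.card (center G)) := by
    rw [e1, ← e2]; ring
  exact Nat.eq_of_mul_eq_mul_left hp.pos this

/-- If `x ∉ Z`, then `Z ⊔ ⟨x⟩` is a middle subgroup. -/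
lemma sup_zpowers_middle (hp : p.Prime) (hZ : (center G).index = p ^ 2)
    {x : G} (hx : x ∉ center G) :
    center G < center G ⊔ zpowers x ∧ center G ⊔ zpowers x < ⊤ := by
  have hxmem : x ∈ center G ⊔ zpowers x := Subgroup.mem_sup_right (mem_zpowers x)
  have hlt : center G < center G ⊔ zpowers x :=
    lt_of_le_of_ne le_sup_left (fun h => hx (h ▸ hxmem))
  refine ⟨hlt, lt_of_le_of_ne le_top fun htop => hx ?_⟩
  have hxc : x ∈ centralizer {x} := mem_centralizer_singleton_iff.mpr rfl
  have : (⊤ : Subgroup G) ≤ centralizer {x} := by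
    rw [← htop]
    exact sup_le (Subgroup.center_le_centralizer _) (zpowers_le.mpr hxc)
  have : centralizer ({x} : Set G) = ⊤ := top_le_iff.mp this
  exact Subgroup.centralizer_eq_top_iff_subset.mp this rfl

/-- A middle subgroup equals `Z ⊔ ⟨x⟩` for any of its elements outside the center. -/
lemma middle_eq_sup (hp : p.Prime) (hZ : (center G).index = p ^ 2)
    {H : Subgroup G} (h1 : center G < H) (h2 : H < ⊤)
    {x : G} (hxH : x ∈ H) (hx : x ∉ center G) :
    H = center G ⊔ zpowers x := by
  have hKle : center G ⊔ zpowers x ≤ H := sup_le h1.le (zpowers_le.mpr hxH)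
  obtain ⟨hK1, hK2⟩ := sup_zpowers_middle hp hZ hx
  have hiK := middle_index hp hZ hK1 hK2
  have hiH := middle_index hp hZ h1 h2
  have hc1 := middle_card hp hZ h1 h2
  have hc2 := middle_card hp hZ hK1 hK2
  exact (Subgroup.eq_of_le_of_card_ge hKle (by omega)).symm

/-- A middle subgroup is commutative. -/
lemma middle_comm (hp : p.Prime) (hZ : (center G).index = p ^ 2)
    {H : Subgroup G} (h1 : center G < H) (h2 : H < ⊤) : IsMulCommutative H := by
  rw [← Subgroup.le_centralizer_iff_isMulCommutative]
  intro y hy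
  by_cases hyZ : y ∈ center G
  · exact Subgroup.center_le_centralizer (H : Set G) hyZ
  · have hHeq := middle_eq_sup hp hZ h1 h2 hy hyZ
    have hyc : y ∈ centralizer {y} := mem_centralizer_singleton_iff.mpr rfl
    have hle : H ≤ centralizer {y} := by
      rw [hHeq]
      exact sup_le (Subgroup.center_le_centralizer _) (zpowers_le.mpr hyc)
    intro h hh
    exact mem_centralizer_singleton_iff.mp (hle hh)

/-- The centralizer of a middle subgroup is itself. -/
lemma middle_centralizer (hp : p.Prime) (hZ : (center G).index = p ^ 2)
    {H : Subgroup G} (h1 : center G < H) (h2 : H < ⊤) :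
    centralizer (H : Set G) = H := by
  have hcomm := middle_comm hp hZ h1 h2
  have hle : H ≤ centralizer (H : Set G) :=
    Subgroup.le_centralizer_iff_isMulCommutative.mpr hcomm
  have hne : centralizer (H : Set G) ≠ ⊤ := by
    intro htop
    have : (H : Set G) ⊆ center G := Subgroup.centralizer_eq_top_iff_subset.mp htop
    obtain ⟨x, hxH, hxZ⟩ := SetLike.exists_of_lt h1
    exact hxZ (this hxH)
  have hClt : centralizer (H : Set G) < ⊤ := lt_of_le_of_ne le_top hne
  have hCgt : center G < centralizer (H : Set G) := lt_of_lt_of_le h1 hle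
  have hiC := middle_index hp hZ hCgt hClt
  have hc1 := middle_card hp hZ h1 h2
  have hc2 := middle_card hp hZ hCgt hClt
  exact (Subgroup.eq_of_le_of_card_ge hle (by omega)).symm

lemma cd_of_center_le (hp : p.Prime) (hZ : (center G).index = p ^ 2)
    {H : Subgroup G} (h : center G ≤ H) :
    cdMeasure G H = Nat.card G * Nat.card (center G) := by
  rcases h.lt_or_eq with h1 | h1
  · rcases lt_or_eq_of_le (le_top : H ≤ ⊤) with h2 | h2
    · rw [cdMeasure, middle_centralizer hp hZ h1 h2, middle_card hp hZ h1 h2]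
      have e2 : (center G).index * Nat.card (center G) = Nat.card G :=
        Subgroup.index_mul_card (center G)
      rw [hZ] at e2
      rw [← e2]; ring
    · subst h2
      rw [cdMeasure, Subgroup.card_top]
      congr 1
      rw [show ((⊤ : Subgroup G) : Set G) = Set.univ from rfl, Subgroup.centralizer_univ]
  · rw [← h1, cdMeasure]
    have : centralizer ((center G : Subgroup G) : Set G) = ⊤ :=
      Subgroup.centralizer_eq_top_iff_subset.mpr subset_rfl
    rw [this, Subgroup.card_top, mul_comm]

lemma centralizer_sup_center (K : Subgroup G) :
    centralizer ((center G ⊔ K : Subgroup G) : Set G) = centralizer (K : Set G) := by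
  apply le_antisymm
  · exact Subgroup.centralizer_le (SetLike.coe_subset_coe.mpr le_sup_right)
  · rw [Subgroup.le_centralizer_iff]
    exact sup_le (Subgroup.center_le_centralizer _)
      (Subgroup.le_centralizer_iff.mp le_rfl)

lemma cd_le (hp : p.Prime) (hZ : (center G).index = p ^ 2) (K : Subgroup G) :
    cdMeasure G K ≤ Nat.card G * Nat.card (center G) := by
  have h := cd_of_center_le hp hZ (le_sup_left : center G ≤ center G ⊔ K)
  rw [cdMeasure, centralizer_sup_center] at h
  rw [cdMeasure, ← h]
  exact Nat.mul_le_mul_right _ (Subgroup.card_le_of_le le_sup_right)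

lemma center_le_of_cd_eq (hp : p.Prime) (hZ : (center G).index = p ^ 2)
    {K : Subgroup G} (h : cdMeasure G K = Nat.card G * Nat.card (center G)) :
    center G ≤ K := by
  have hsup := cd_of_center_le hp hZ (le_sup_left : center G ≤ center G ⊔ K)
  rw [cdMeasure, centralizer_sup_center] at hsup
  rw [cdMeasure] at h
  have hCpos : 0 < Nat.card (centralizer (K : Set G)) := Nat.card_pos
  have hcard : Nat.card K = Nat.card (center G ⊔ K : Subgroup G) :=
    Nat.eq_of_mul_eq_mul_right hCpos (h.trans hsup.symm)
  have heq := Subgroup.eq_of_le_of_card_ge (le_sup_right : K ≤ center G ⊔ K) (le_of_eq hcard.symm)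
  rw [heq]
  exact le_sup_left

end Helpers

theorem stmt_0 (G : Type*) [Group G] [Finite G] (p : ℕ) (hp : p.Prime)
    (hZ : (Subgroup.center G).index = p ^ 2) :
    CD G = {H : Subgroup G | Subgroup.center G ≤ H} ∧
    (∀ H : Subgroup G, Subgroup.center G < H → H < ⊤ → IsMulCommutative H) ∧
    {H : Subgroup G | Subgroup.center G < H ∧ H < ⊤}.ncard = p + 1 := by
  classical
  open Subgroup in
  refine ⟨?_, fun H h1 h2 => middle_comm hp hZ h1 h2, ?_⟩
  · ext H
    simp only [CD, Set.mem_setOf_eq]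
    constructor
    · intro hH
      apply center_le_of_cd_eq hp hZ
      refine le_antisymm (cd_le hp hZ H) ?_
      calc Nat.card G * Nat.card (Subgroup.center G)
          = cdMeasure G (Subgroup.center G) := (cd_of_center_le hp hZ le_rfl).symm
        _ ≤ cdMeasure G H := hH _
    · intro hH K
      rw [cd_of_center_le hp hZ hH]
      exact cd_le hp hZ K
  · -- counting
    have : Fintype G := Fintype.ofFinite G
    set Z := Subgroup.center G with hZdef
    set g : G → Subgroup G := fun x => Z ⊔ Subgroup.zpowers x with hg
    set T : Finset G := Finset.univ.filter (fun x => x ∉ Z) with hT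
    set S : Finset (Subgroup G) := T.image g with hS
    have hmiddle : ∀ H ∈ S, Z < H ∧ H < ⊤ := by
      intro H hH
      obtain ⟨x, hxT, hxH⟩ := Finset.mem_image.mp hH
      have hx : x ∉ Z := (Finset.mem_filter.mp hxT).2
      rw [← hxH]
      exact sup_zpowers_middle hp hZ hx
    have hsetS : {H : Subgroup G | Z < H ∧ H < ⊤} = ↑S := by
      ext H
      rw [hS]
      simp only [Set.mem_setOf_eq, Finset.coe_image, Set.mem_image, Finset.mem_coe]
      constructor
      · rintro ⟨h1, h2⟩
        obtain ⟨x, hxH, hxZ⟩ := SetLike.exists_of_lt h1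
        refine ⟨x, Finset.mem_filter.mpr ⟨Finset.mem_univ x, hxZ⟩, ?_⟩
        exact (middle_eq_sup hp hZ h1 h2 hxH hxZ).symm
      · rintro ⟨x, hxT, rfl⟩
        exact hmiddle _ (Finset.mem_image_of_mem g hxT)
    rw [hsetS, Set.ncard_coe_finset]
    -- fiberwise counting
    have hmaps : ∀ x ∈ T, g x ∈ S := fun x hx => Finset.mem_image_of_mem g hx
    have hfiber : ∀ H ∈ S, (T.filter (fun x => g x = H)).card
        = (p - 1) * Nat.card Z := by
      intro H hH
      obtain ⟨h1, h2⟩ := hmiddle H hH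
      have hfeq : T.filter (fun x => g x = H)
          = (Finset.univ.filter (fun x => x ∈ H)) \ (Finset.univ.filter (fun x => x ∈ Z)) := by
        ext x
        simp only [Finset.mem_filter, Finset.mem_sdiff, Finset.mem_univ, true_and, hT]
        constructor
        · rintro ⟨hxZ, hgx⟩
          refine ⟨?_, hxZ⟩
          rw [← hgx]
          exact Subgroup.mem_sup_right (Subgroup.mem_zpowers x)
        · rintro ⟨hxH, hxZ⟩
          exact ⟨hxZ, (middle_eq_sup hp hZ h1 h2 hxH hxZ).symm⟩
      have hsub : (Finset.univ.filter (fun x => x ∈ Z))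
          ⊆ (Finset.univ.filter (fun x => x ∈ H)) := by
        intro x hx
        simp only [Finset.mem_filter, Finset.mem_univ, true_and] at *
        exact h1.le hx
      rw [hfeq, Finset.card_sdiff_of_subset hsub]
      have cH : (Finset.univ.filter (fun x => x ∈ H)).card = Nat.card H := by
        rw [Nat.card_eq_fintype_card, Fintype.card_subtype]
      have cZ : (Finset.univ.filter (fun x => x ∈ Z)).card = Nat.card Z := by
        rw [Nat.card_eq_fintype_card, Fintype.card_subtype]
      rw [cH, cZ, middle_card hp hZ h1 h2, Nat.sub_mul, one_mul]
    have hTcard : T.card = (p ^ 2 - 1) * Nat.card Z := by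
      have : T = Finset.univ \ (Finset.univ.filter (fun x => x ∈ Z)) := by
        ext x
        simp [hT]
      rw [this, Finset.card_sdiff_of_subset (Finset.filter_subset _ _)]
      have cZ : (Finset.univ.filter (fun x => x ∈ Z)).card = Nat.card Z := by
        rw [Nat.card_eq_fintype_card, Fintype.card_subtype]
      have cG : (Finset.univ : Finset G).card = Nat.card G := by
        rw [Nat.card_eq_fintype_card, Finset.card_univ]
      have e2 : Nat.card G = p ^ 2 * Nat.card Z := by
        rw [← Subgroup.index_mul_card Z, hZ]
      rw [cZ, cG, e2, Nat.sub_mul, one_mul]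
    have hsum : T.card = S.card * ((p - 1) * Nat.card Z) := by
      rw [Finset.card_eq_sum_card_fiberwise hmaps]
      rw [Finset.sum_congr rfl hfiber, Finset.sum_const, smul_eq_mul]
    have hfac : p ^ 2 - 1 = (p + 1) * (p - 1) := by
      have := Nat.sq_sub_sq p 1
      simpa using this
    have hpos : 0 < (p - 1) * Nat.card Z := by
      have h1 : 0 < Nat.card Z := Nat.card_pos
      have hp2 : 2 ≤ p := hp.two_le
      have h2 : 0 < p - 1 := by omega
      exact Nat.mul_pos h2 h1
    apply Nat.eq_of_mul_eq_mul_right hpos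
    rw [← hsum, hTcard, hfac, mul_assoc]
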